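/- Let A be a C*-algebra admitting an almost idempotent approximate identity: a net (I_n)_{n ∈ N} in A with 0 ≤ I_n, ‖I_n‖ ≤ 1, ‖I_n·a − a‖ → 0 and ‖a·I_n − a‖ → 0 for every a ∈ A, and I_m·I_n = I_n whenever m ≥ n. Then the compactly supported states are weak-* dense in the state space of A: for every state φ on A, every finite set S ⊆ A, and every ε > 0, there exists a compactly supported state φ' on A with |φ(a) − φ'(a)| < ε for all a ∈ S. -/

import Mathlib

open Filter Topology
open scoped ComplexOrder ENNReal NNReal MultiplierAlgebra

noncomputable section

/-- A *state* on a C⋆-algebra: a continuous linear functional into `ℂ` that is nonnegative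
on nonnegative elements and has norm `1`. -/
def IsState {E : Type*} [NormedAddCommGroup E] [NormedSpace ℂ E] [PartialOrder E]
    (φ : E →L[ℂ] ℂ) : Prop :=
  (∀ a : E, 0 ≤ a → 0 ≤ φ a) ∧ ‖φ‖ = 1

variable {A : Type*} [NonUnitalCStarAlgebra A] [PartialOrder A] [StarOrderedRing A]

/-- `L` is an extended seminorm on the self-adjoint part `A_sa` of `A`:
`L (t • b) = |t| * L b` for real `t`, and `L (b + b') ≤ L b + L b'`. -/
def IsESeminorm (L : selfAdjoint A → ℝ≥0∞) : Prop :=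
  (∀ (t : ℝ) (b : selfAdjoint A), L (t • b) = (‖t‖₊ : ℝ≥0∞) * L b) ∧
    ∀ b b' : selfAdjoint A, L (b + b') ≤ L b + L b'

/-- The spectral distance `d_L(φ, ψ) = sup { |φ b - ψ b| : b ∈ A_sa, L b ≤ 1 }`,
valued in `[0, ∞]`. -/
def dL (L : selfAdjoint A → ℝ≥0∞) (φ ψ : A → ℂ) : ℝ≥0∞ :=
  ⨆ b : {b : selfAdjoint A // L b ≤ 1}, (‖φ (b.1 : A) - ψ (b.1 : A)‖₊ : ℝ≥0∞)

/-- An approximate identity for `A`: a net `(I n)` with `0 ≤ I n`, `‖I n‖ ≤ 1`, and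
`‖I n * a - a‖ → 0`, `‖a * I n - a‖ → 0` for every `a : A`. -/
def IsApproxUnit {ι : Type*} [Preorder ι] (I : ι → A) : Prop :=
  (∀ n, 0 ≤ I n) ∧ (∀ n, ‖I n‖ ≤ 1) ∧
    ∀ a : A, Tendsto (fun n => ‖I n * a - a‖) atTop (𝓝 0) ∧
      Tendsto (fun n => ‖a * I n - a‖) atTop (𝓝 0)

section Aux

lemma conj_of_nonneg' {z : ℂ} (hz : 0 ≤ z) : (starRingEnd ℂ) z = z := by
  rw [Complex.conj_eq_iff_im]
  exact (Complex.nonneg_iff.mp hz).2.symm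

lemma re_coe_of_nonneg' {z : ℂ} (hz : 0 ≤ z) : ((z.re : ℝ) : ℂ) = z := by
  have him := (Complex.nonneg_iff.mp hz).2
  exact Complex.ext (by simp) (by simp [← him])

variable (φ : A →L[ℂ] ℂ) (hpos : ∀ a : A, 0 ≤ a → 0 ≤ φ a)

include hpos in
lemma phi_real_of_selfAdjoint {b : A} (hb : IsSelfAdjoint b) :
    (starRingEnd ℂ) (φ b) = φ b := by
  rw [← CFC.posPart_sub_negPart b hb, map_sub, map_sub,
    conj_of_nonneg' (hpos _ (CFC.posPart_nonneg b)),
    conj_of_nonneg' (hpos _ (CFC.negPart_nonneg b))]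

include hpos in
lemma phi_star (a : A) : φ (star a) = (starRingEnd ℂ) (φ a) := by
  set b : A := a + star a with hbdef
  set c : A := Complex.I • (a - star a) with hcdef
  have hb : IsSelfAdjoint b := by
    simp [IsSelfAdjoint, hbdef, star_add, add_comm]
  have hc : IsSelfAdjoint c := by
    simp only [IsSelfAdjoint, hcdef, star_smul, star_sub, star_star, Complex.star_def,
      Complex.conj_I, neg_smul, ← smul_neg, neg_sub]
  have hIc : Complex.I • c = star a - a := by
    rw [hcdef, smul_smul, Complex.I_mul_I, neg_smul, one_smul, neg_sub]
  have ha' : a = (2⁻¹ : ℂ) • (b - Complex.I • c) := by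
    rw [hIc, hbdef]
    have : a + star a - (star a - a) = (2 : ℂ) • a := by
      rw [two_smul]; abel
    rw [this, smul_smul]; norm_num
  have ha : star a = (2⁻¹ : ℂ) • (b + Complex.I • c) := by
    rw [hIc, hbdef]
    have : a + star a + (star a - a) = (2 : ℂ) • star a := by
      rw [two_smul]; abel
    rw [this, smul_smul]; norm_num
  have hfb := phi_real_of_selfAdjoint φ hpos hb
  have hfc := phi_real_of_selfAdjoint φ hpos hc
  rw [ha]
  conv_rhs => rw [ha']
  simp only [map_smul, map_add, map_sub, smul_eq_mul, map_mul, map_inv₀, map_ofNat]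
  rw [hfb, hfc]
  simp [Complex.conj_I]

/-- The positive semidefinite sesquilinear form associated to a positive functional. -/
def phiCore : PreInnerProductSpace.Core ℂ A where
  inner x y := φ (star x * y)
  conj_inner_symm x y := by
    show (starRingEnd ℂ) (φ (star y * x)) = φ (star x * y)
    rw [← phi_star φ hpos, star_mul, star_star]
  re_inner_nonneg x := by
    have := hpos _ (star_mul_self_nonneg x)
    simpa using (Complex.nonneg_iff.mp this).1
  add_left x y z := by simp [star_add, add_mul]
  smul_left x y r := by
    simp [star_smul, smul_mul_assoc, Complex.star_def, smul_eq_mul]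

include hpos in
lemma phi_cauchy_schwarz (x y : A) :
    ‖φ (star x * y)‖ ^ 2 ≤ (φ (star x * x)).re * (φ (star y * y)).re := by
  letI C : PreInnerProductSpace.Core ℂ A := phiCore φ hpos
  have hCS : ‖φ (star x * y)‖ * ‖φ (star y * x)‖ ≤
      RCLike.re (φ (star x * x)) * RCLike.re (φ (star y * y)) :=
    @InnerProductSpace.Core.inner_mul_inner_self_le ℂ A _ _ _ C x y
  have hsymm : ‖φ (star y * x)‖ = ‖φ (star x * y)‖ := by
    have h1 := phi_star φ hpos (star y * x)
    rw [star_mul, star_star] at h1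
    rw [h1, RCLike.norm_conj]
  rw [hsymm] at hCS
  rw [sq]
  simpa [RCLike.re_to_complex] using hCS

include hpos in
lemma phi_key {c : A} (hc : 0 ≤ c) (hc2 : c * c = c) (a : A) :
    ‖φ (c * a * c)‖ ≤ ‖a‖ * (φ c).re := by
  have hcsa : star c = c := IsSelfAdjoint.of_nonneg hc
  have hr0 : 0 ≤ (φ c).re := by
    simpa using (Complex.nonneg_iff.mp (hpos c hc)).1
  -- `c * (star a * a) * c ≤ ‖a‖ ^ 2 • c` in `A`
  have h2 : c * (star a * a) * c ≤ (‖a‖ ^ 2 : ℝ) • c := by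
    have hsa1 : IsSelfAdjoint (c * (star a * a) * c) := by
      simp only [IsSelfAdjoint, star_mul, star_star, hcsa, mul_assoc]
    have hsa2 : IsSelfAdjoint ((‖a‖ ^ 2 : ℝ) • c) := by
      rw [IsSelfAdjoint, star_smul, star_trivial, hcsa]
    rw [← Unitization.inr_le_iff _ _ hsa1 hsa2]
    have hle : star (↑a : Unitization ℂ A) * ↑a ≤ algebraMap ℝ _ (‖a‖ ^ 2) := by
      simpa [Unitization.norm_inr] using
        (CStarAlgebra.star_mul_le_algebraMap_norm_sq (A := Unitization ℂ A) (a := (↑a : _)))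
    have := star_left_conjugate_le_conjugate hle (↑c : Unitization ℂ A)
    have hstar : star (↑c : Unitization ℂ A) = ↑c := by
      rw [← Unitization.inr_star, hcsa]
    calc (↑(c * (star a * a) * c) : Unitization ℂ A)
        = star (↑c : Unitization ℂ A) * (star ↑a * ↑a) * ↑c := by
          rw [hstar]
          simp [← Unitization.inr_mul, ← Unitization.inr_star, mul_assoc]
      _ ≤ star (↑c : Unitization ℂ A) * algebraMap ℝ _ (‖a‖ ^ 2) * ↑c := this
      _ = (↑((‖a‖ ^ 2 : ℝ) • c) : Unitization ℂ A) := by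
          rw [hstar, Algebra.algebraMap_eq_smul_one, mul_smul_comm, smul_mul_assoc, mul_one,
            ← Unitization.inr_mul, hc2, Unitization.inr_smul]
  have h3 : (φ (c * (star a * a) * c)).re ≤ ‖a‖ ^ 2 * (φ c).re := by
    have hle : φ (c * (star a * a) * c) ≤ φ ((‖a‖ ^ 2 : ℝ) • c) := by
      have h0 := hpos _ (sub_nonneg.mpr h2)
      rw [map_sub] at h0
      exact sub_nonneg.mp h0
    have hre := (Complex.le_def.mp hle).1
    have hsmul : φ ((‖a‖ ^ 2 : ℝ) • c) = ((‖a‖ ^ 2 : ℝ) : ℂ) * φ c := by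
      rw [← Complex.coe_smul, map_smul, smul_eq_mul]
    rw [hsmul] at hre
    simpa [Complex.mul_re, ← Complex.ofReal_pow] using hre
  have hcs := phi_cauchy_schwarz φ hpos c (a * c)
  have e1 : star c * (a * c) = c * a * c := by rw [hcsa, mul_assoc]
  have e2 : star c * c = c := by rw [hcsa, hc2]
  have e3 : star (a * c) * (a * c) = c * (star a * a) * c := by
    rw [star_mul, hcsa]; simp [mul_assoc]
  rw [e1, e2, e3] at hcs
  have hna : 0 ≤ ‖a‖ := norm_nonneg a
  have hX : 0 ≤ ‖φ (c * a * c)‖ := norm_nonneg _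
  nlinarith [mul_le_mul_of_nonneg_left h3 hr0, sq_nonneg (‖φ (c * a * c)‖ - ‖a‖ * (φ c).re),
    sq_nonneg (‖φ (c * a * c)‖ + ‖a‖ * (φ c).re), mul_nonneg hna hr0]

end Aux

set_option maxHeartbeats 1000000 in
/-- If `A` has an almost idempotent approximate identity, the compactly supported states
are weak-* dense in the state space. -/
theorem compactlySupported_states_weakStar_dense
    {ι : Type*} [Preorder ι] [Nonempty ι] [IsDirected ι (· ≤ ·)]
    (I : ι → A) (hI : IsApproxUnit I)
    (hidem : ∀ m n : ι, n ≤ m → I m * I n = I n)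
    (φ : A →L[ℂ] ℂ) (hφ : IsState φ) (S : Finset A) (ε : ℝ) (hε : 0 < ε) :
    ∃ φ' : A →L[ℂ] ℂ, IsState φ' ∧ (∃ a : A, a ≠ 0 ∧ φ' a = (‖a‖ : ℂ)) ∧
      ∀ a ∈ S, ‖φ a - φ' a‖ < ε := by
  haveI : (atTop : Filter ι).NeBot := Filter.atTop_neBot_iff.mpr ⟨‹_›, ‹_›⟩
  obtain ⟨hpos, hnorm⟩ := hφ
  -- a bound on the norms of elements of `S`
  obtain ⟨M, hM0, hM⟩ : ∃ M : ℝ, 0 < M ∧ ∀ a ∈ S, ‖a‖ ≤ M := by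
    refine ⟨((S.sup fun a => ‖a‖₊ : ℝ≥0) : ℝ) + 1, by positivity, fun a ha => ?_⟩
    have h1 : (‖a‖₊ : ℝ) ≤ ((S.sup fun a => ‖a‖₊ : ℝ≥0) : ℝ) := by
      exact_mod_cast Finset.le_sup (f := fun a => ‖a‖₊) ha
    rw [coe_nnnorm] at h1
    linarith
  set δ : ℝ := min (ε / (2 * M)) 2⁻¹ with hδdef
  have hδ0 : 0 < δ := lt_min (by positivity) (by norm_num)
  have hδhalf : δ ≤ 2⁻¹ := min_le_right _ _
  -- choose `a₀` almost attaining the norm of `φ`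
  obtain ⟨a₀, ha₀1, ha₀2⟩ : ∃ a₀ : A, ‖a₀‖ ≤ 1 ∧ 1 - δ / 2 < ‖φ a₀‖ := by
    by_contra h
    push_neg at h
    have hb : ‖φ‖ ≤ 1 - δ / 2 := by
      refine ContinuousLinearMap.opNorm_le_bound φ (by linarith) fun x => ?_
      rcases eq_or_ne x 0 with hx | hx
      · simp [hx]
      · have hxn : 0 < ‖x‖ := norm_pos_iff.mpr hx
        have e : (‖x‖ : ℝ) • ((‖x‖)⁻¹ • x) = x := by
          rw [smul_smul]; field_simp; exact one_smul _ _
        calc ‖φ x‖ = ‖φ ((‖x‖ : ℝ) • (‖x‖⁻¹ • x))‖ := by rw [e]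
          _ = ‖x‖ * ‖φ (‖x‖⁻¹ • x)‖ := by
              rw [ContinuousLinearMap.map_smul_of_tower, norm_smul, Real.norm_of_nonneg (norm_nonneg x)]
          _ ≤ ‖x‖ * (1 - δ / 2) := by
              refine mul_le_mul_of_nonneg_left (h _ ?_) hxn.le
              rw [norm_smul, Real.norm_of_nonneg (by positivity)]
              rw [inv_mul_cancel₀ hxn.ne']
          _ = (1 - δ / 2) * ‖x‖ := mul_comm _ _
    rw [hnorm] at hb
    linarith
  -- eventual closeness of `φ (I n * a * I n)` to `φ a`
  have hten : ∀ (a : A) (ρ : ℝ), 0 < ρ →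
      ∀ᶠ n in atTop, ‖φ (I n * a * I n) - φ a‖ < ρ := by
    intro a ρ hρ
    have h1 := (hI.2.2 a).1
    have h2 := (hI.2.2 a).2
    have key : ∀ n, ‖φ (I n * a * I n) - φ a‖ ≤ ‖a * I n - a‖ + ‖I n * a - a‖ := by
      intro n
      rw [← map_sub]
      calc ‖φ (I n * a * I n - a)‖ ≤ ‖φ‖ * ‖I n * a * I n - a‖ := φ.le_opNorm _
        _ = ‖I n * a * I n - a‖ := by rw [hnorm, one_mul]
        _ ≤ ‖I n * (a * I n - a)‖ + ‖I n * a - a‖ := by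
            have e : I n * a * I n - a = I n * (a * I n - a) + (I n * a - a) := by
              noncomm_ring
            rw [e]; exact norm_add_le _ _
        _ ≤ ‖a * I n - a‖ + ‖I n * a - a‖ := by
            have h3 := norm_mul_le (I n) (a * I n - a)
            have h4 := hI.2.1 n
            have h5 := norm_nonneg (a * I n - a)
            nlinarith
    have hsum : Tendsto (fun n => ‖a * I n - a‖ + ‖I n * a - a‖) atTop (𝓝 0) := by
      simpa using h2.add h1
    filter_upwards [hsum.eventually_lt_const hρ] with n hn
    exact lt_of_le_of_lt (key n) hn
  have hev : ∀ᶠ n in atTop, (∀ a ∈ S, ‖φ (I n * a * I n) - φ a‖ < ε / 2) ∧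
      ‖φ (I n * a₀ * I n) - φ a₀‖ < δ / 2 := by
    refine Filter.Eventually.and ?_ (hten a₀ (δ / 2) (by positivity))
    rw [Filter.eventually_all_finset]
    exact fun a _ => hten a (ε / 2) (by positivity)
  obtain ⟨n, hn⟩ := hev.exists
  set c : A := I n with hcdef
  have hc0 : 0 ≤ c := hI.1 n
  have hc2 : c * c = c := hidem n n le_rfl
  have hcn : ‖c‖ ≤ 1 := hI.2.1 n
  have hcsa : star c = c := IsSelfAdjoint.of_nonneg hc0
  set r : ℝ := (φ c).re with hrdef
  have key := phi_key φ hpos hc0 hc2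
  have hr0 : 0 ≤ r := (Complex.nonneg_iff.mp (hpos c hc0)).1
  have hr1 : 1 - δ < r := by
    have h2 : ‖φ a₀‖ - ‖φ (c * a₀ * c) - φ a₀‖ ≤ ‖φ (c * a₀ * c)‖ := by
      have := norm_sub_le (φ (c * a₀ * c)) (φ (c * a₀ * c) - φ a₀)
      simpa using this
    have h3 : ‖φ (c * a₀ * c)‖ ≤ r := by
      have := key a₀
      nlinarith [ha₀1, hr0]
    have := hn.2
    have h4 : 1 - δ < ‖φ (c * a₀ * c)‖ := by
      have := hn.2
      linarith [ha₀2]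
    linarith
  have hrpos : 0 < r := by
    have : (2⁻¹ : ℝ) ≤ 1 - δ := by linarith [hδhalf]
    linarith
  have hrle1 : r ≤ 1 := by
    have h1 : r ≤ ‖φ c‖ := by
      exact Complex.re_le_norm _
    have h2 : ‖φ c‖ ≤ ‖φ‖ * ‖c‖ := φ.le_opNorm c
    rw [hnorm, one_mul] at h2
    linarith
  have hrinv1 : 1 ≤ r⁻¹ := by
    have h1 : r * r⁻¹ = 1 := mul_inv_cancel₀ hrpos.ne'
    nlinarith [inv_nonneg.mpr hr0]
  have hφc : φ c = (r : ℂ) := (re_coe_of_nonneg' (hpos c hc0)).symm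
  -- the compactly supported state
  set T : A →L[ℂ] A :=
    (ContinuousLinearMap.mul ℂ A c).comp ((ContinuousLinearMap.mul ℂ A).flip c) with hTdef
  set ψ : A →L[ℂ] ℂ := ((r : ℂ))⁻¹ • (φ.comp T) with hψdef
  have hψa : ∀ a, ψ a = ((r : ℂ))⁻¹ * φ (c * a * c) := by
    intro a
    simp [hψdef, hTdef, mul_assoc]
  have hψbound : ∀ a, ‖ψ a‖ ≤ ‖a‖ := by
    intro a
    rw [hψa, norm_mul, norm_inv, Complex.norm_real, Real.norm_of_nonneg hr0]
    calc r⁻¹ * ‖φ (c * a * c)‖ ≤ r⁻¹ * (‖a‖ * r) := by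
          exact mul_le_mul_of_nonneg_left (key a) (by positivity)
      _ = ‖a‖ := by field_simp
  have hψc : ψ c = 1 := by
    rw [hψa, hc2, hc2, hφc]
    exact inv_mul_cancel₀ (by exact_mod_cast hrpos.ne')
  have hψnorm_le : ‖ψ‖ ≤ 1 :=
    ContinuousLinearMap.opNorm_le_bound ψ zero_le_one fun a => by
      simpa using hψbound a
  have hc1 : ‖c‖ = 1 := by
    refine le_antisymm hcn ?_
    have h1 : (1 : ℝ) = ‖ψ c‖ := by rw [hψc]; simp
    have h2 : ‖ψ c‖ ≤ ‖ψ‖ * ‖c‖ := ψ.le_opNorm c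
    nlinarith [norm_nonneg c, hψnorm_le]
  have hψnorm : ‖ψ‖ = 1 := by
    refine le_antisymm hψnorm_le ?_
    have h1 : (1 : ℝ) = ‖ψ c‖ := by rw [hψc]; simp
    have h2 : ‖ψ c‖ ≤ ‖ψ‖ * ‖c‖ := ψ.le_opNorm c
    rw [hc1, mul_one] at h2
    linarith
  have hψpos : ∀ a : A, 0 ≤ a → 0 ≤ ψ a := by
    intro a ha
    have hconj : 0 ≤ c * a * c := by
      have := star_left_conjugate_nonneg ha c
      rwa [hcsa] at this
    have hz := hpos _ hconj
    rw [hψa, ← re_coe_of_nonneg' hz, ← Complex.ofReal_inv, ← Complex.ofReal_mul]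
    have hre : 0 ≤ (φ (c * a * c)).re := (Complex.nonneg_iff.mp hz).1
    calc (0 : ℂ) = ((0 : ℝ) : ℂ) := by norm_num
      _ ≤ ((r⁻¹ * (φ (c * a * c)).re : ℝ) : ℂ) := by
          rw [Complex.real_le_real]; positivity
  refine ⟨ψ, ⟨hψpos, hψnorm⟩, ⟨c, ?_, by rw [hψc, hc1]; norm_num⟩, ?_⟩
  · intro hc
    rw [hc] at hc1
    simp at hc1
  · intro a ha
    have h1 : ‖φ a - φ (c * a * c)‖ < ε / 2 := by
      have := hn.1 a ha
      rwa [norm_sub_rev]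
    have h2 : ‖φ (c * a * c) - ψ a‖ ≤ δ * M := by
      rw [hψa]
      have e : φ (c * a * c) - ((r : ℂ))⁻¹ * φ (c * a * c)
          = (1 - ((r : ℂ))⁻¹) * φ (c * a * c) := by ring
      rw [e, norm_mul]
      have hn1 : ‖1 - ((r : ℂ))⁻¹‖ = r⁻¹ - 1 := by
        rw [← Complex.ofReal_one, ← Complex.ofReal_inv, ← Complex.ofReal_sub,
          Complex.norm_real, Real.norm_eq_abs, abs_of_nonpos (by linarith), neg_sub]
      rw [hn1]
      calc (r⁻¹ - 1) * ‖φ (c * a * c)‖ ≤ (r⁻¹ - 1) * (‖a‖ * r) :=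
            mul_le_mul_of_nonneg_left (key a) (by linarith)
        _ = (1 - r) * ‖a‖ := by field_simp
        _ ≤ δ * M := by
            refine mul_le_mul (by linarith) (hM a ha) (norm_nonneg a) hδ0.le
    have h3 : δ * M ≤ ε / 2 := by
      have : δ ≤ ε / (2 * M) := min_le_left _ _
      calc δ * M ≤ (ε / (2 * M)) * M := mul_le_mul_of_nonneg_right this hM0.le
        _ = ε / 2 := by field_simp
    calc ‖φ a - ψ a‖ ≤ ‖φ a - φ (c * a * c)‖ + ‖φ (c * a * c) - ψ a‖ := by
          have := dist_triangle (φ a) (φ (c * a * c)) (ψ a)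
          simpa [dist_eq_norm] using this
      _ < ε / 2 + ε / 2 := by linarith
      _ = ε := by ring
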